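/- Let k ≥ 2, let 2 ≤ ℓ ≤ k, and let π be any proper partition of k. Then every hypergraph sequence satisfying Dev(ℓ) also satisfies Expand_{1/2}(π). -/

import Mathlib

open Filter Finset Asymptotics

/-- A hypergraph sequence: for each `n`, the edge set of a hypergraph
on the vertex set `Fin n`. -/
abbrev HSeq : Type := (n : ℕ) → Finset (Finset (Fin n))

/-- The sequence is `k`-uniform: every edge has exactly `k` vertices. -/
def UniformSeq (k : ℕ) (H : HSeq) : Prop :=
  ∀ n : ℕ, ∀ e ∈ H n, e.card = k

/-- A proper partition of `k`: an (ordered list representing an unordered) collection of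
at least two positive integers summing to `k`. -/
def ProperPartition (k : ℕ) (π : List ℕ) : Prop :=
  2 ≤ π.length ∧ (∀ m ∈ π, 0 < m) ∧ π.sum = k

/-- `π'` is a refinement of `π`: there is a surjection `φ` from the parts of `π'`
to the parts of `π` so that each part of `π` is the sum of its `φ`-preimages. -/
def IsRefinement (π' π : List ℕ) : Prop :=
  ∃ φ : Fin π'.length → Fin π.length, Function.Surjective φ ∧
    ∀ i : Fin π.length, π.get i = ∑ j ∈ Finset.univ.filter (fun j => φ j = i), π'.get j

/-- `e(S_1, …, S_t)`: the number of tuples `(s_1, …, s_t) ∈ S_1 × ⋯ × S_t` whose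
union is an edge of `H`. -/
def eCount {n : ℕ} (H : Finset (Finset (Fin n))) {t : ℕ}
    (S : Fin t → Finset (Finset (Fin n))) : ℕ :=
  ((Fintype.piFinset S).filter (fun s => Finset.univ.biUnion s ∈ H)).card

/-- The property `Expand_p(π)` of a hypergraph sequence. -/
def Expand (k : ℕ) (p : ℝ) (π : List ℕ) (H : HSeq) : Prop :=
  ∃ f : ℕ → ℝ, f =o[atTop] (fun n => (n : ℝ) ^ k) ∧
    ∀ n : ℕ, ∀ S : Fin π.length → Finset (Finset (Fin n)),
      (∀ i : Fin π.length, ∀ s ∈ S i, s.card = π.get i) →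
      |(eCount (H n) S : ℝ) - p * ∏ i : Fin π.length, ((S i).card : ℝ)| ≤ f n

/-- The property `PartiteExpand_p(π)`: the `Expand` estimate is only required when the
vertex sets `V(S_i)` are pairwise disjoint. -/
def PartiteExpand (k : ℕ) (p : ℝ) (π : List ℕ) (H : HSeq) : Prop :=
  ∃ f : ℕ → ℝ, f =o[atTop] (fun n => (n : ℝ) ^ k) ∧
    ∀ n : ℕ, ∀ S : Fin π.length → Finset (Finset (Fin n)),
      (∀ i : Fin π.length, ∀ s ∈ S i, s.card = π.get i) →
      (∀ i j : Fin π.length, i ≠ j →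
        Disjoint ((S i).biUnion id) ((S j).biUnion id)) →
      |(eCount (H n) S : ℝ) - p * ∏ i : Fin π.length, ((S i).card : ℝ)| ≤ f n

/-- `K_k(G)`: the `k`-element vertex subsets all of whose `ℓ`-element subsets are
edges of the `ℓ`-uniform hypergraph `G`. -/
def cliqueSet (k ℓ : ℕ) {n : ℕ} (G : Finset (Finset (Fin n))) : Finset (Finset (Fin n)) :=
  (Finset.powersetCard k (Finset.univ : Finset (Fin n))).filter
    (fun T => ∀ S ∈ Finset.powersetCard ℓ T, S ∈ G)

/-- The property `CD_p(ℓ)` of a hypergraph sequence. -/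
def CD (k : ℕ) (p : ℝ) (ℓ : ℕ) (H : HSeq) : Prop :=
  ∃ f : ℕ → ℝ, f =o[atTop] (fun n => (n : ℝ) ^ k) ∧
    ∀ n : ℕ, ∀ G : Finset (Finset (Fin n)), (∀ e ∈ G, e.card = ℓ) →
      |(((cliqueSet k ℓ G) ∩ H n).card : ℝ) - p * ((cliqueSet k ℓ G).card : ℝ)| ≤ f n

/-- The property `CD_p(ℓ,s)` of a hypergraph sequence: `G` ranges over `ℓ`-uniform
hypergraphs whose vertex set `W` is a subset of `Fin n`, and one counts `k`-sets
inducing at least `s` edges of `G`. -/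
def CDs (k : ℕ) (p : ℝ) (ℓ s : ℕ) (H : HSeq) : Prop :=
  ∃ f : ℕ → ℝ, f =o[atTop] (fun n => (n : ℝ) ^ k) ∧
    ∀ n : ℕ, ∀ W : Finset (Fin n), ∀ G : Finset (Finset (Fin n)),
      (∀ e ∈ G, e.card = ℓ ∧ e ⊆ W) →
      |(((H n).filter (fun T => s ≤ (G.filter (fun e => e ⊆ T)).card)).card : ℝ) -
        p * (((Finset.powersetCard k W).filter
          (fun T => s ≤ (G.filter (fun e => e ⊆ T)).card)).card : ℝ)| ≤ f n

/-- The `k`-tuple `(x_1, …, x_{k-ℓ}, y_{1,ε_1}, …, y_{ℓ,ε_ℓ})`. -/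
def octTuple {n : ℕ} (k ℓ : ℕ) (x : Fin (k - ℓ) → Fin n) (y : Fin ℓ × Fin 2 → Fin n)
    (ε : Fin ℓ → Fin 2) (i : Fin k) : Fin n :=
  if h : (i : ℕ) < k - ℓ then x ⟨(i : ℕ), h⟩
  else
    have hi : (i : ℕ) - (k - ℓ) < ℓ := by have := i.isLt; omega
    y (⟨(i : ℕ) - (k - ℓ), hi⟩, ε ⟨(i : ℕ) - (k - ℓ), hi⟩)

/-- The squashed octahedron `O[x⃗, y⃗]`: the collection of `k`-element sets of the form
`{x_1, …, x_{k-ℓ}, y_{1,i_1}, …, y_{ℓ,i_ℓ}}`. -/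
def octSet {n : ℕ} (k ℓ : ℕ) (x : Fin (k - ℓ) → Fin n)
    (y : Fin ℓ × Fin 2 → Fin n) : Finset (Finset (Fin n)) :=
  (Finset.image (fun ε : Fin ℓ → Fin 2 =>
    Finset.image (octTuple k ℓ x y ε) Finset.univ) Finset.univ).filter
    (fun T => T.card = k)

/-- `Σ (−1)^{|O[x⃗,y⃗] ∩ E(H)|}` over all choices of vertices. -/
noncomputable def devSum (k ℓ : ℕ) {n : ℕ} (H : Finset (Finset (Fin n))) : ℝ :=
  ∑ x : Fin (k - ℓ) → Fin n, ∑ y : Fin ℓ × Fin 2 → Fin n,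
    (-1 : ℝ) ^ ((octSet k ℓ x y ∩ H).card)

/-- The property `Dev(ℓ)` of a hypergraph sequence. -/
def Dev (k ℓ : ℕ) (H : HSeq) : Prop :=
  (fun n => devSum k ℓ (H n)) =o[atTop] (fun n => (n : ℝ) ^ (k + ℓ))

open scoped Classical in
/-- `dev_{ℓ,P}(H)`: the deviation sum restricted to octahedra all of whose `k`-tuples
lie in `P`. -/
noncomputable def devP (k ℓ : ℕ) {n : ℕ} (H : Finset (Finset (Fin n)))
    (P : Set (Fin k → Fin n)) : ℝ :=
  ∑ x : Fin (k - ℓ) → Fin n, ∑ y : Fin ℓ × Fin 2 → Fin n,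
    if ∀ ε : Fin ℓ → Fin 2, octTuple k ℓ x y ε ∈ P then
      (-1 : ℝ) ^ ((octSet k ℓ x y ∩ H).card)
    else 0

/-- `Q ⊆ V(H)^k` is complete in coordinate `i`: membership in `Q` only depends on the
coordinates other than `i`. -/
def CompleteInCoord {n k : ℕ} (Q : Set (Fin k → Fin n)) (i : Fin k) : Prop :=
  ∃ Q' : Set ({j : Fin k // j ≠ i} → Fin n),
    Q = {z : Fin k → Fin n | (fun j : {j : Fin k // j ≠ i} => z j.1) ∈ Q'}

namespace DIE
variable {n k t : ℕ}

noncomputable def F (Hn : Finset (Finset (Fin n))) (z : Fin k → Fin n) : ℝ :=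
  if Finset.image z Finset.univ ∈ Hn then -1 else 1

def Phi (β : Fin k → Fin t) (z : Fin k → Fin n) (i : Fin t) : Finset (Fin n) :=
  Finset.image z (Finset.univ.filter (fun j => β j = i))

lemma biUnion_Phi (β : Fin k → Fin t) (z : Fin k → Fin n) :
    Finset.univ.biUnion (Phi β z) = Finset.image z Finset.univ := by
  ext a
  simp only [Phi, mem_biUnion, mem_image, mem_filter, mem_univ, true_and]
  constructor
  · rintro ⟨i, j, -, rfl⟩; exact ⟨j, rfl⟩
  · rintro ⟨j, rfl⟩; exact ⟨β j, j, rfl, rfl⟩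

lemma card_image_eq_fixed {α V : Type*} [Fintype α] [DecidableEq α] [DecidableEq V]
    (s : Finset V) (hs : s.card = Fintype.card α) :
    Nat.card {f : α → V // Finset.image f Finset.univ = s} = Nat.factorial (Fintype.card α) := by
  have key : {f : α → V // Finset.image f Finset.univ = s} ≃ (α ↪ (s : Finset V)) := by
    refine ⟨fun f => ⟨fun a => ⟨f.1 a, ?_⟩, ?_⟩, fun e => ⟨fun a => (e a : V), ?_⟩, ?_, ?_⟩
    · have : f.1 a ∈ Finset.image f.1 Finset.univ := mem_image_of_mem _ (mem_univ a)
      rwa [f.2] at this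
    · have hcard : (Finset.image f.1 Finset.univ).card = (Finset.univ : Finset α).card := by
        rw [f.2, hs]
        exact Finset.card_univ.symm
      intro a b hab
      have : f.1 a = f.1 b := congrArg Subtype.val hab
      exact (Finset.injOn_of_card_image_eq hcard) (mem_coe.mpr (mem_univ a)) (mem_coe.mpr (mem_univ b)) this
    · apply Finset.eq_of_subset_of_card_le
      · intro a ha
        simp only [Finset.mem_image] at ha
        obtain ⟨b, -, rfl⟩ := ha
        exact (e b).2
      · have hinj : Function.Injective (fun a : α => ((e a : V))) :=
          fun a b hab => e.injective (Subtype.ext hab)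
        rw [Finset.card_image_of_injective _ hinj, hs]
        exact Finset.card_univ.ge
    · intro f; apply Subtype.ext; rfl
    · intro e; apply DFunLike.ext; intro a; apply Subtype.ext; rfl
  rw [Nat.card_congr key, Nat.card_eq_fintype_card, Fintype.card_embedding_eq,
    Fintype.card_coe, hs, Nat.descFactorial_self]

/-- The equivalence splitting a function on `Fin k` into its restrictions to β-fibers. -/
def fiberEquiv (β : Fin k → Fin t) :
    (Fin k → Fin n) ≃ ((i : Fin t) → ({j : Fin k // β j = i} → Fin n)) where
  toFun z i j := z j.1
  invFun g j := g (β j) ⟨j, rfl⟩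
  left_inv z := rfl
  right_inv g := by
    funext i j
    obtain ⟨j, hj⟩ := j
    subst hj
    rfl

lemma Phi_eq_image (β : Fin k → Fin t) (z : Fin k → Fin n) (i : Fin t) :
    Phi β z i = Finset.image (fun j : {j : Fin k // β j = i} => z j.1) Finset.univ := by
  ext a
  simp only [Phi, mem_image, mem_filter, mem_univ, true_and, Subtype.exists]
  constructor
  · rintro ⟨j, hj, rfl⟩; exact ⟨j, hj, rfl⟩
  · rintro ⟨j, hj, rfl⟩; exact ⟨j, hj, rfl⟩

lemma fiber_card (β : Fin k → Fin t) (σ : Fin t → Finset (Fin n))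
    (hσ : ∀ i, (σ i).card = (Finset.univ.filter (fun j => β j = i)).card) :
    (Finset.univ.filter (fun z : Fin k → Fin n => ∀ i, Phi β z i = σ i)).card
      = ∏ i, Nat.factorial (σ i).card := by
  classical
  rw [← Fintype.card_subtype, ← Nat.card_eq_fintype_card]
  have e1 : {z : Fin k → Fin n // ∀ i, Phi β z i = σ i}
      ≃ ((i : Fin t) → {f : {j : Fin k // β j = i} → Fin n // Finset.image f Finset.univ = σ i}) := by
    refine (Equiv.subtypeEquiv (fiberEquiv β) ?_).trans (Equiv.subtypePiEquivPi)
    intro z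
    constructor
    · intro hz i; rw [← hz i, Phi_eq_image]; rfl
    · intro hz i; rw [Phi_eq_image]; exact hz i
  rw [Nat.card_congr e1, Nat.card_pi]
  refine Finset.prod_congr rfl (fun i _ => ?_)
  have hcard : (σ i).card = Fintype.card {j : Fin k // β j = i} := by
    rw [Fintype.card_subtype, hσ i]
  rw [card_image_eq_fixed (σ i) hcard, ← hcard]

lemma sum_over_tuples (β : Fin k → Fin t) (S : Fin t → Finset (Finset (Fin n)))
    (hS : ∀ i, ∀ s ∈ S i, s.card = (Finset.univ.filter (fun j => β j = i)).card)
    (g : (Fin t → Finset (Fin n)) → ℝ) :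
    ∑ z : Fin k → Fin n, (∏ i, if Phi β z i ∈ S i then (1:ℝ) else 0) * g (Phi β z)
      = (∏ i : Fin t, (Nat.factorial (Finset.univ.filter (fun j => β j = i)).card : ℝ))
        * ∑ σ ∈ Fintype.piFinset S, g σ := by
  classical
  have h1 : ∀ z : Fin k → Fin n,
      (∏ i, if Phi β z i ∈ S i then (1:ℝ) else 0)
        = if ∀ i, Phi β z i ∈ S i then (1:ℝ) else 0 := by
    intro z
    rw [Finset.prod_boole]
    simp
  simp_rw [h1, ite_mul, one_mul, zero_mul]
  rw [Finset.sum_ite, Finset.sum_const_zero, add_zero]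
  -- now: ∑ z in filter P univ, g (Phi β z)
  rw [← Finset.sum_fiberwise_of_maps_to (g := fun z => Phi β z)
      (fun z hz => by
        simp only [Finset.mem_filter, Finset.mem_univ, true_and] at hz
        exact Fintype.mem_piFinset.mpr hz)]
  rw [Finset.mul_sum]
  refine Finset.sum_congr rfl (fun σ hσ => ?_)
  have hcards : ∀ i, (σ i).card = (Finset.univ.filter (fun j => β j = i)).card :=
    fun i => hS i _ (Fintype.mem_piFinset.mp hσ i)
  have hset : (Finset.univ.filter (fun z : Fin k → Fin n => ∀ i, Phi β z i ∈ S i)).filter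
      (fun z => Phi β z = σ)
      = Finset.univ.filter (fun z : Fin k → Fin n => ∀ i, Phi β z i = σ i) := by
    ext z
    simp only [Finset.mem_filter, Finset.mem_univ, true_and]
    constructor
    · rintro ⟨-, rfl⟩; exact fun i => rfl
    · intro hz
      constructor
      · intro i; rw [hz i]; exact Fintype.mem_piFinset.mp hσ i
      · funext i; exact hz i
  have hg : ∀ z ∈ (Finset.univ.filter (fun z : Fin k → Fin n => ∀ i, Phi β z i ∈ S i)).filter
      (fun z => Phi β z = σ), g (Phi β z) = g σ := by
    intro z hz
    rw [(Finset.mem_filter.mp hz).2]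
  rw [Finset.sum_congr rfl hg, Finset.sum_const, hset, fiber_card β σ hcards, nsmul_eq_mul]
  push_cast
  congr 1
  exact Finset.prod_congr rfl (fun i _ => by rw [hcards i])


noncomputable def X (k m : ℕ) (n : ℕ) (G : (Fin k → Fin n) → ℝ) : ℝ :=
  ∑ x : Fin (k - m) → Fin n, ∑ y : Fin m × Fin 2 → Fin n,
    ∏ ε : Fin m → Fin 2, G (octTuple k m x y ε)

def ext1 {V : Type*} (r : ℕ) (x' : Fin r → V) (a : V) {q : ℕ} : Fin q → V :=
  fun i => if h : (i : ℕ) < r then x' ⟨i, h⟩ else a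

def joinY {V : Type*} {m : ℕ} (p : Fin 2 → V) (y' : Fin m × Fin 2 → V) :
    Fin (m+1) × Fin 2 → V :=
  fun jd => if h : (jd.1 : ℕ) = 0 then p jd.2
    else y' (⟨(jd.1 : ℕ) - 1, by have := jd.1.isLt; omega⟩, jd.2)

def consE {m : ℕ} (e0 : Fin 2) (ε' : Fin m → Fin 2) : Fin (m+1) → Fin 2 :=
  fun j => if h : (j : ℕ) = 0 then e0 else ε' ⟨(j : ℕ) - 1, by have := j.isLt; omega⟩

lemma oct_split {n : ℕ} (k m : ℕ) (hm : m < k) (x' : Fin (k - (m+1)) → Fin n)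
    (p : Fin 2 → Fin n) (y' : Fin m × Fin 2 → Fin n) (e0 : Fin 2) (ε' : Fin m → Fin 2) :
    octTuple k (m+1) x' (joinY p y') (consE e0 ε')
      = octTuple k m (ext1 (k - (m+1)) x' (p e0)) y' ε' := by
  funext i
  have hik := i.isLt
  simp only [octTuple, ext1, joinY, consE]
  by_cases h1 : (i : ℕ) < k - (m+1)
  · rw [dif_pos h1, dif_pos (by omega : (i:ℕ) < k - m), dif_pos h1]
  · rw [dif_neg h1]
    by_cases h2 : (i : ℕ) < k - m
    · -- i = k - m - 1 : the p e0 coordinate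
      have h3 : (i : ℕ) - (k - (m+1)) = 0 := by omega
      rw [dif_pos h2, dif_neg h1]
      simp only [dif_pos h3]
    · have h3 : (i : ℕ) - (k - (m+1)) ≠ 0 := by omega
      rw [dif_neg h2]
      simp only [dif_neg h3]
      have h4 : (i : ℕ) - (k - (m+1)) - 1 = (i : ℕ) - (k - m) := by omega
      exact congrArg y' (Prod.ext (Fin.ext h4) (congrArg ε' (Fin.ext h4)))

/-- Splitting off the last `x`-coordinate. -/
def extEquiv (r : ℕ) (V : Type*) : ((Fin r → V) × V) ≃ (Fin (r+1) → V) where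
  toFun xa := ext1 r xa.1 xa.2
  invFun x := (fun i => x ⟨i, by omega⟩, x ⟨r, by omega⟩)
  left_inv := by
    rintro ⟨x', a⟩
    refine Prod.ext (funext fun i => ?_) ?_
    · simp [ext1, i.isLt]
    · simp [ext1]
  right_inv := by
    intro x
    funext i
    have := i.isLt
    simp only [ext1]
    split_ifs with h
    · rfl
    · congr 1; exact Fin.ext (by simp only [Fin.val_mk]; omega)

/-- Splitting off the first doubled pair. -/
def joinEquiv (m : ℕ) (V : Type*) :
    ((Fin 2 → V) × (Fin m × Fin 2 → V)) ≃ (Fin (m+1) × Fin 2 → V) where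
  toFun py := joinY py.1 py.2
  invFun y := (fun d => y (0, d), fun jd => y (⟨(jd.1 : ℕ) + 1, by have := jd.1.isLt; omega⟩, jd.2))
  left_inv := by
    rintro ⟨p, y'⟩
    refine Prod.ext (funext fun d => ?_) (funext fun jd => ?_)
    · simp [joinY]
    · simp only [joinY]
      rw [dif_neg (by simp)]
      simp
  right_inv := by
    intro y
    funext jd
    obtain ⟨j, d⟩ := jd
    have := j.isLt
    simp only [joinY]
    split_ifs with h
    · have hj : j = (0 : Fin (m+1)) := Fin.ext (by simp [h])
      rw [hj]
    · exact congrArg y (Prod.ext (Fin.ext (by simp only [Fin.val_mk]; omega)) rfl)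

def consEquiv' (m : ℕ) : (Fin 2 × (Fin m → Fin 2)) ≃ (Fin (m+1) → Fin 2) where
  toFun p := consE p.1 p.2
  invFun ε := (ε 0, fun j => ε ⟨(j : ℕ) + 1, by have := j.isLt; omega⟩)
  left_inv := by
    rintro ⟨e0, ε'⟩
    refine Prod.ext ?_ (funext fun j => ?_)
    · simp [consE]
    · simp only [consE]
      rw [dif_neg (by simp)]
      simp
  right_inv := by
    intro ε
    funext j
    have := j.isLt
    simp only [consE]
    split_ifs with h
    · have hj : j = (0 : Fin (m+1)) := Fin.ext (by simp [h])
      rw [hj]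
    · exact congrArg ε (Fin.ext (by simp only [Fin.val_mk]; omega))

lemma sum_ext1 {V M : Type*} [Fintype V] [DecidableEq V] [AddCommMonoid M]
    (r q : ℕ) (hq : q = r + 1) (f : (Fin q → V) → M) :
    ∑ x : Fin q → V, f x = ∑ x' : Fin r → V, ∑ a : V, f (ext1 r x' a) := by
  subst hq
  rw [← Equiv.sum_comp (extEquiv r V) f, Fintype.sum_prod_type]
  rfl

lemma swap_sq {ι V : Type*} [Fintype ι] [Fintype V] (g : V → ι → ℝ) :
    ∑ a : V, ∑ b : V, ∑ y : ι, g a y * g b y = ∑ y : ι, (∑ a : V, g a y)^2 := by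
  have h1 : ∀ a : V, ∑ b : V, ∑ y : ι, g a y * g b y = ∑ y : ι, ∑ b : V, g a y * g b y :=
    fun a => Finset.sum_comm
  simp_rw [h1]
  rw [Finset.sum_comm]
  refine Finset.sum_congr rfl fun y _ => ?_
  rw [sq, Finset.sum_mul_sum]

lemma X_eq_split (k m : ℕ) (hm : m < k) (n : ℕ) (G : (Fin k → Fin n) → ℝ) :
    X k m n G = ∑ x' : Fin (k - (m+1)) → Fin n, ∑ y : Fin m × Fin 2 → Fin n,
      ∑ a : Fin n, ∏ ε : Fin m → Fin 2, G (octTuple k m (ext1 (k - (m+1)) x' a) y ε) := by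
  unfold X
  rw [sum_ext1 (k - (m+1)) (k - m) (by omega)]
  exact Finset.sum_congr rfl fun x' _ => Finset.sum_comm

lemma X_succ (k m : ℕ) (hm : m < k) (n : ℕ) (G : (Fin k → Fin n) → ℝ) :
    X k (m+1) n G = ∑ x' : Fin (k - (m+1)) → Fin n, ∑ y' : Fin m × Fin 2 → Fin n,
      (∑ a : Fin n, ∏ ε : Fin m → Fin 2, G (octTuple k m (ext1 (k - (m+1)) x' a) y' ε))^2 := by
  unfold X
  refine Finset.sum_congr rfl fun x' _ => ?_
  rw [← Equiv.sum_comp (joinEquiv m (Fin n)), Fintype.sum_prod_type]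
  have hprod : ∀ (p : Fin 2 → Fin n) (y' : Fin m × Fin 2 → Fin n),
      (∏ ε : Fin (m+1) → Fin 2, G (octTuple k (m+1) x' (joinY p y') ε))
        = (∏ ε : Fin m → Fin 2, G (octTuple k m (ext1 (k - (m+1)) x' (p 0)) y' ε))
          * ∏ ε : Fin m → Fin 2, G (octTuple k m (ext1 (k - (m+1)) x' (p 1)) y' ε) := by
    intro p y'
    rw [← Equiv.prod_comp (consEquiv' m), Fintype.prod_prod_type]
    have : ∀ (e0 : Fin 2) (ε' : Fin m → Fin 2),
        G (octTuple k (m+1) x' (joinY p y') (consEquiv' m (e0, ε')))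
          = G (octTuple k m (ext1 (k - (m+1)) x' (p e0)) y' ε') := by
      intro e0 ε'
      rw [show consEquiv' m (e0, ε') = consE e0 ε' from rfl, oct_split k m hm]
    simp_rw [this]
    rw [Fin.prod_univ_two]
  have hre : ∀ py : (Fin 2 → Fin n) × (Fin m × Fin 2 → Fin n),
      (∏ ε : Fin (m+1) → Fin 2, G (octTuple k (m+1) x' (joinEquiv m (Fin n) py) ε))
        = (∏ ε : Fin m → Fin 2, G (octTuple k m (ext1 (k - (m+1)) x' (py.1 0)) py.2 ε))
          * ∏ ε : Fin m → Fin 2, G (octTuple k m (ext1 (k - (m+1)) x' (py.1 1)) py.2 ε) := by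
    intro py
    exact hprod py.1 py.2
  simp_rw [hre]
  -- now : ∑ p : Fin 2 → Fin n, ∑ y', f (p 0) y' * f (p 1) y'
  rw [← Equiv.sum_comp (piFinTwoEquiv (fun _ => Fin n)).symm, Fintype.sum_prod_type]
  simp only [piFinTwoEquiv_symm_apply, Matrix.cons_val_zero, Matrix.cons_val_one, Matrix.head_cons]
  exact swap_sq (fun a y' => ∏ ε : Fin m → Fin 2, G (octTuple k m (ext1 (k - (m+1)) x' a) y' ε))

lemma X_zero (k n : ℕ) (G : (Fin k → Fin n) → ℝ) :
    X k 0 n G = ∑ z : Fin k → Fin n, G z := by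
  unfold X
  refine Finset.sum_congr rfl fun x _ => ?_
  rw [Fintype.sum_unique, Fintype.prod_unique]
  congr 1
  funext i
  have := i.isLt
  simp only [octTuple]
  rw [dif_pos (by omega)]
  exact congrArg x (Fin.ext rfl)

lemma cs_step (k m : ℕ) (hm : m < k) (n : ℕ) (G W : (Fin k → Fin n) → ℝ)
    (hW1 : ∀ z, |W z| ≤ 1)
    (hWind : ∀ z z' : Fin k → Fin n, (∀ j : Fin k, (j : ℕ) ≠ k - (m+1) → z j = z' j) →
      W z = W z') :
    (X k m n (fun z => G z * W z))^2 ≤ (n:ℝ)^(k + m - 1) * X k (m+1) n G := by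
  rcases Nat.eq_zero_or_pos n with hn | hn
  · subst hn
    haveI h1 : IsEmpty (Fin (k - m) → Fin 0) := by
      have : Nonempty (Fin (k - m)) := ⟨⟨0, by omega⟩⟩
      infer_instance
    haveI h2 : IsEmpty (Fin (m+1) × Fin 2 → Fin 0) := by
      have : Nonempty (Fin (m+1) × Fin 2) := ⟨(0, 0)⟩
      infer_instance
    have e1 : X k m 0 (fun z => G z * W z) = 0 := by
      unfold X
      rw [Finset.univ_eq_empty, Finset.sum_empty]
    have e2 : X k (m+1) 0 G = 0 := by
      unfold X
      refine Finset.sum_eq_zero fun x _ => ?_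
      rw [Finset.univ_eq_empty, Finset.sum_empty]
    rw [e1, e2, mul_zero]
    norm_num
  · -- positive n
    have a0 : Fin n := ⟨0, hn⟩
    set f : (Fin (k - (m+1)) → Fin n) × (Fin m × Fin 2 → Fin n) → ℝ :=
      fun w => ∑ a : Fin n, ∏ ε : Fin m → Fin 2, G (octTuple k m (ext1 (k - (m+1)) w.1 a) w.2 ε)
      with hf
    set c : (Fin (k - (m+1)) → Fin n) × (Fin m × Fin 2 → Fin n) → ℝ :=
      fun w => ∏ ε : Fin m → Fin 2, W (octTuple k m (ext1 (k - (m+1)) w.1 a0) w.2 ε)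
      with hc
    have hWa : ∀ (x' : Fin (k - (m+1)) → Fin n) (y : Fin m × Fin 2 → Fin n)
        (a : Fin n) (ε : Fin m → Fin 2),
        W (octTuple k m (ext1 (k - (m+1)) x' a) y ε)
          = W (octTuple k m (ext1 (k - (m+1)) x' a0) y ε) := by
      intro x' y a ε
      apply hWind
      intro j hj
      have hjk := j.isLt
      simp only [octTuple, ext1]
      by_cases h1 : (j : ℕ) < k - m
      · rw [dif_pos h1, dif_pos h1, dif_pos (by omega : (j:ℕ) < k - (m+1)),
          dif_pos (by omega : (j:ℕ) < k - (m+1))]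
      · rw [dif_neg h1, dif_neg h1]
    have key : X k m n (fun z => G z * W z)
        = ∑ w : (Fin (k - (m+1)) → Fin n) × (Fin m × Fin 2 → Fin n), f w * c w := by
      rw [X_eq_split k m hm n, Fintype.sum_prod_type]
      refine Finset.sum_congr rfl fun x' _ => Finset.sum_congr rfl fun y _ => ?_
      rw [hf, hc]
      simp only
      rw [Finset.sum_mul]
      refine Finset.sum_congr rfl fun a _ => ?_
      rw [Finset.prod_mul_distrib]
      congr 1
      exact Finset.prod_congr rfl fun ε _ => hWa x' y a ε
    have keyX : X k (m+1) n G
        = ∑ w : (Fin (k - (m+1)) → Fin n) × (Fin m × Fin 2 → Fin n), (f w)^2 := by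
      rw [X_succ k m hm n, Fintype.sum_prod_type]
    have hcs := Finset.sum_mul_sq_le_sq_mul_sq Finset.univ f c
    have hc2 : ∑ w : (Fin (k - (m+1)) → Fin n) × (Fin m × Fin 2 → Fin n), (c w)^2
        ≤ (n:ℝ)^(k + m - 1) := by
      have hcb : ∀ w, (c w)^2 ≤ 1 := by
        intro w
        have : |c w| ≤ 1 := by
          rw [hc]
          simp only
          rw [Finset.abs_prod]
          exact Finset.prod_le_one (fun _ _ => abs_nonneg _) (fun ε _ => hW1 _)
        calc (c w)^2 = |c w|^2 := (sq_abs _).symm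
        _ ≤ 1 := by nlinarith [abs_nonneg (c w)]
      calc ∑ w, (c w)^2 ≤ ∑ _w : (Fin (k - (m+1)) → Fin n) × (Fin m × Fin 2 → Fin n), (1:ℝ) :=
            Finset.sum_le_sum (fun w _ => hcb w)
        _ = (Fintype.card ((Fin (k - (m+1)) → Fin n) × (Fin m × Fin 2 → Fin n)) : ℝ) := by
            rw [Finset.sum_const, Finset.card_univ, nsmul_eq_mul, mul_one]
        _ = (n:ℝ)^(k + m - 1) := by
            have hcval : Fintype.card ((Fin (k - (m+1)) → Fin n) × (Fin m × Fin 2 → Fin n))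
                = n ^ (k + m - 1) := by
              simp only [Fintype.card_prod, Fintype.card_fun, Fintype.card_fin]
              rw [← pow_add]
              congr 1
              omega
            rw [hcval]
            push_cast
            ring
    calc (X k m n (fun z => G z * W z))^2
        = (∑ w, f w * c w)^2 := by rw [key]
      _ ≤ (∑ w, (f w)^2) * (∑ w, (c w)^2) := hcs
      _ ≤ (∑ w, (f w)^2) * (n:ℝ)^(k + m - 1) := by
          refine mul_le_mul_of_nonneg_left hc2 ?_
          exact Finset.sum_nonneg fun w _ => sq_nonneg _
      _ = (n:ℝ)^(k + m - 1) * X k (m+1) n G := by rw [keyX, mul_comm]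

variable {n k t : ℕ}

def u (β : Fin k → Fin t) (S : Fin t → Finset (Finset (Fin n))) (i : Fin t)
    (z : Fin k → Fin n) : ℝ :=
  if Phi β z i ∈ S i then 1 else 0

def Aset (β : Fin k → Fin t) (m : ℕ) : Finset (Fin t) :=
  Finset.univ.filter (fun i : Fin t => ∀ j : Fin k, k - m ≤ (j : ℕ) → β j = i)

noncomputable def Gm (Hn : Finset (Finset (Fin n))) (β : Fin k → Fin t)
    (S : Fin t → Finset (Finset (Fin n))) (m : ℕ) (z : Fin k → Fin n) : ℝ :=
  F Hn z * ∏ i ∈ Aset β m, u β S i z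

lemma Aset_mono (β : Fin k → Fin t) (m : ℕ) : Aset β (m+1) ⊆ Aset β m := by
  intro i hi
  simp only [Aset, Finset.mem_filter, Finset.mem_univ, true_and] at hi ⊢
  intro j hj
  exact hi j (by omega)

lemma Aset_zero (β : Fin k → Fin t) : Aset β 0 = Finset.univ := by
  ext i
  simp only [Aset, Finset.mem_filter, Finset.mem_univ, true_and, iff_true]
  intro j hj
  have := j.isLt
  omega

lemma Phi_congr (β : Fin k → Fin t) (i : Fin t) (z z' : Fin k → Fin n)
    (h : ∀ j : Fin k, β j = i → z j = z' j) : Phi β z i = Phi β z' i := by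
  unfold Phi
  refine Finset.image_congr ?_
  intro j hj
  simp only [Finset.coe_filter, Set.mem_setOf_eq, Finset.mem_univ, true_and] at hj
  exact h j hj

lemma u_congr (β : Fin k → Fin t) (S : Fin t → Finset (Finset (Fin n))) (i : Fin t)
    (z z' : Fin k → Fin n) (h : ∀ j : Fin k, β j = i → z j = z' j) :
    u β S i z = u β S i z' := by
  unfold u
  rw [Phi_congr β i z z' h]

lemma Gm_factor (Hn : Finset (Finset (Fin n))) (β : Fin k → Fin t)
    (S : Fin t → Finset (Finset (Fin n))) (m : ℕ) :
    Gm Hn β S m = fun z => Gm Hn β S (m+1) z *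
      ∏ i ∈ Aset β m \ Aset β (m+1), u β S i z := by
  funext z
  unfold Gm
  rw [mul_assoc, mul_comm (∏ i ∈ Aset β (m+1), u β S i z), Finset.prod_sdiff (Aset_mono β m)]

lemma Vm_bound (β : Fin k → Fin t) (S : Fin t → Finset (Finset (Fin n))) (m : ℕ)
    (z : Fin k → Fin n) : |∏ i ∈ Aset β m \ Aset β (m+1), u β S i z| ≤ 1 := by
  rw [Finset.abs_prod]
  refine Finset.prod_le_one (fun _ _ => abs_nonneg _) (fun i _ => ?_)
  unfold u
  split_ifs <;> simp

lemma Vm_indep (β : Fin k → Fin t) (S : Fin t → Finset (Finset (Fin n))) (m : ℕ)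
    (hm : m < k)
    (z z' : Fin k → Fin n) (h : ∀ j : Fin k, (j : ℕ) ≠ k - (m+1) → z j = z' j) :
    (∏ i ∈ Aset β m \ Aset β (m+1), u β S i z)
      = ∏ i ∈ Aset β m \ Aset β (m+1), u β S i z' := by
  refine Finset.prod_congr rfl (fun i hi => ?_)
  simp only [Finset.mem_sdiff, Aset, Finset.mem_filter, Finset.mem_univ, true_and] at hi
  obtain ⟨h1, h2⟩ := hi
  push_neg at h2
  obtain ⟨j0, hj0, hj0'⟩ := h2
  have hj0v : (j0 : ℕ) = k - (m+1) := by
    rcases Nat.lt_or_ge (j0 : ℕ) (k - m) with h' | h'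
    · omega
    · exact absurd (h1 j0 h') hj0'
  have hβ : β ⟨k - (m+1), by omega⟩ ≠ i := by
    have : j0 = (⟨k - (m+1), by omega⟩ : Fin k) := Fin.ext hj0v
    rwa [this] at hj0'
  refine u_congr β S i z z' (fun j hj => ?_)
  refine h j (fun hjv => ?_)
  exact hβ (by rwa [show (⟨k - (m+1), by omega⟩ : Fin k) = j from Fin.ext hjv.symm])

lemma cascade (Hn : Finset (Finset (Fin n))) (β : Fin k → Fin t)
    (S : Fin t → Finset (Finset (Fin n))) :
    ∀ m : ℕ, 1 ≤ m → m ≤ k →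
      (X k 0 n (Gm Hn β S 0))^(2^m) ≤ (n:ℝ)^(k * 2^m - k - m) * X k m n (Gm Hn β S m) := by
  intro m
  induction m with
  | zero => omega
  | succ m ih =>
    intro h1 hmk
    rcases Nat.eq_zero_or_pos m with rfl | hm1
    · -- base case m+1 = 1
      have hstep := cs_step k 0 (by omega) n (Gm Hn β S 1)
        (fun z => ∏ i ∈ Aset β 0 \ Aset β 1, u β S i z)
        (Vm_bound β S 0) (Vm_indep β S 0 (by omega))
      rw [← Gm_factor Hn β S 0] at hstep
      calc (X k 0 n (Gm Hn β S 0))^(2^1) = (X k 0 n (Gm Hn β S 0))^2 := by norm_num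
        _ ≤ (n:ℝ)^(k + 0 - 1) * X k 1 n (Gm Hn β S 1) := hstep
        _ = (n:ℝ)^(k * 2^1 - k - 1) * X k 1 n (Gm Hn β S 1) := by
            congr 2
            omega
    · -- inductive step
      have hm2 : m + 1 ≤ 2^m := (Nat.lt_two_pow_self (n := m))
      have hkm : k + m ≤ k * 2^m := by
        calc k + m ≤ k + k*m := by
              have : m ≤ k * m := Nat.le_mul_of_pos_left m (by omega)
              omega
          _ = k * (m+1) := by ring
          _ ≤ k * 2^m := Nat.mul_le_mul_left k hm2
      have ih' := ih hm1 (by omega)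
      have hstep := cs_step k m (by omega) n (Gm Hn β S (m+1))
        (fun z => ∏ i ∈ Aset β m \ Aset β (m+1), u β S i z)
        (Vm_bound β S m) (Vm_indep β S m (by omega))
      rw [← Gm_factor Hn β S m] at hstep
      have hnn : (0:ℝ) ≤ (X k 0 n (Gm Hn β S 0))^(2^m) := by
        have : 2^m = 2 * 2^(m-1) := by
          rw [← pow_succ']
          congr 1
          omega
        rw [this, pow_mul]
        exact pow_nonneg (sq_nonneg _) _
      have hsq : ((X k 0 n (Gm Hn β S 0))^(2^m))^2
          ≤ ((n:ℝ)^(k * 2^m - k - m) * X k m n (Gm Hn β S m))^2 :=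
        pow_le_pow_left₀ hnn ih' 2
      calc (X k 0 n (Gm Hn β S 0))^(2^(m+1))
          = ((X k 0 n (Gm Hn β S 0))^(2^m))^2 := by
            rw [← pow_mul, ← pow_succ]
        _ ≤ ((n:ℝ)^(k * 2^m - k - m) * X k m n (Gm Hn β S m))^2 := hsq
        _ = (n:ℝ)^(2 * (k * 2^m - k - m)) * (X k m n (Gm Hn β S m))^2 := by
            rw [mul_pow, ← pow_mul]
            ring_nf
        _ ≤ (n:ℝ)^(2 * (k * 2^m - k - m)) * ((n:ℝ)^(k + m - 1) * X k (m+1) n (Gm Hn β S (m+1))) := by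
            refine mul_le_mul_of_nonneg_left hstep ?_
            positivity
        _ = (n:ℝ)^(k * 2^(m+1) - k - (m+1)) * X k (m+1) n (Gm Hn β S (m+1)) := by
            rw [← mul_assoc, ← pow_add]
            congr 2
            have : k * 2^(m+1) = 2 * (k * 2^m) := by ring
            omega

lemma F_abs (Hn : Finset (Finset (Fin n))) (z : Fin k → Fin n) : |F Hn z| = 1 := by
  unfold F
  split_ifs <;> simp

section Good

variable {ℓ : ℕ}

lemma oct_inj (hlk : ℓ ≤ k) (x : Fin (k - ℓ) → Fin n) (y : Fin ℓ × Fin 2 → Fin n)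
    (hgood : Function.Injective (Sum.elim x y)) (ε : Fin ℓ → Fin 2) :
    Function.Injective (octTuple k ℓ x y ε) := by
  intro i i' h
  have hi := i.isLt
  have hi' := i'.isLt
  simp only [octTuple] at h
  split_ifs at h with h1 h2 h2
  · have h4 : Sum.elim x y (Sum.inl ⟨(i:ℕ), h1⟩) = Sum.elim x y (Sum.inl ⟨(i':ℕ), h2⟩) := h
    have h5 := hgood h4
    have h6 : ((⟨(i:ℕ), h1⟩ : Fin (k - ℓ)) : ℕ) = ((⟨(i':ℕ), h2⟩ : Fin (k - ℓ)) : ℕ) := by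
      rw [Sum.inl.inj h5]
    exact Fin.ext h6
  · have h4 : Sum.elim x y (Sum.inl ⟨(i:ℕ), h1⟩) = Sum.elim x y (Sum.inr
      (⟨(i':ℕ) - (k - ℓ), by omega⟩, ε ⟨(i':ℕ) - (k - ℓ), by omega⟩)) := h
    exact absurd (hgood h4) (by simp)
  · have h4 : Sum.elim x y (Sum.inr
      (⟨(i:ℕ) - (k - ℓ), by omega⟩, ε ⟨(i:ℕ) - (k - ℓ), by omega⟩))
        = Sum.elim x y (Sum.inl ⟨(i':ℕ), h2⟩) := h
    exact absurd (hgood h4) (by simp)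
  · have h4 : Sum.elim x y (Sum.inr
      (⟨(i:ℕ) - (k - ℓ), by omega⟩, ε ⟨(i:ℕ) - (k - ℓ), by omega⟩))
        = Sum.elim x y (Sum.inr
      (⟨(i':ℕ) - (k - ℓ), by omega⟩, ε ⟨(i':ℕ) - (k - ℓ), by omega⟩)) := h
    have h5 := Sum.inr.inj (hgood h4)
    have h6 : (i:ℕ) - (k - ℓ) = (i':ℕ) - (k - ℓ) := congrArg Fin.val (congrArg Prod.fst h5)
    exact Fin.ext (by omega)

lemma octTuple_hi (hlk : ℓ ≤ k) (x : Fin (k - ℓ) → Fin n) (y : Fin ℓ × Fin 2 → Fin n)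
    (ε : Fin ℓ → Fin 2) (j : Fin ℓ) :
    octTuple k ℓ x y ε ⟨k - ℓ + (j:ℕ), by have := j.isLt; omega⟩ = y (j, ε j) := by
  have hj := j.isLt
  simp only [octTuple]
  rw [dif_neg (by simp)]
  exact congrArg y (Prod.ext (Fin.ext (by simp only [Fin.val_mk]; omega))
    (congrArg ε (Fin.ext (by simp only [Fin.val_mk]; omega))))

lemma octImage_inj (hlk : ℓ ≤ k) (x : Fin (k - ℓ) → Fin n) (y : Fin ℓ × Fin 2 → Fin n)
    (hgood : Function.Injective (Sum.elim x y)) :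
    Function.Injective (fun ε : Fin ℓ → Fin 2 =>
      Finset.image (octTuple k ℓ x y ε) Finset.univ) := by
  intro ε ε' h
  have h' : Finset.image (octTuple k ℓ x y ε) Finset.univ
      = Finset.image (octTuple k ℓ x y ε') Finset.univ := h
  funext j
  have hj := j.isLt
  have hmem : y (j, ε' j) ∈ Finset.image (octTuple k ℓ x y ε) Finset.univ := by
    rw [h', ← octTuple_hi hlk x y ε' j]
    exact Finset.mem_image_of_mem _ (Finset.mem_univ _)
  obtain ⟨i, -, hi⟩ := Finset.mem_image.mp hmem
  have hik := i.isLt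
  by_cases h1 : (i : ℕ) < k - ℓ
  · have h2 : octTuple k ℓ x y ε i = x ⟨(i:ℕ), h1⟩ := by
      simp only [octTuple]; rw [dif_pos h1]
    rw [h2] at hi
    have h4 : Sum.elim x y (Sum.inl ⟨(i:ℕ), h1⟩) = Sum.elim x y (Sum.inr (j, ε' j)) := hi
    exact absurd (hgood h4) (by simp)
  · have h2 : octTuple k ℓ x y ε i
        = y (⟨(i:ℕ) - (k - ℓ), by omega⟩, ε ⟨(i:ℕ) - (k - ℓ), by omega⟩) := by
      simp only [octTuple]; rw [dif_neg h1]
    rw [h2] at hi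
    have h4 : Sum.elim x y (Sum.inr
        (⟨(i:ℕ) - (k - ℓ), by omega⟩, ε ⟨(i:ℕ) - (k - ℓ), by omega⟩))
          = Sum.elim x y (Sum.inr (j, ε' j)) := hi
    have h5 := Sum.inr.inj (hgood h4)
    have h6 : (⟨(i:ℕ) - (k - ℓ), by omega⟩ : Fin ℓ) = j := congrArg Prod.fst h5
    have h7 := congrArg Prod.snd h5
    simp only at h7
    rw [← h7, h6]

lemma term_eq_good (hlk : ℓ ≤ k) (x : Fin (k - ℓ) → Fin n) (y : Fin ℓ × Fin 2 → Fin n)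
    (Hn : Finset (Finset (Fin n)))
    (hgood : Function.Injective (Sum.elim x y)) :
    ∏ ε : Fin ℓ → Fin 2, F Hn (octTuple k ℓ x y ε)
      = (-1 : ℝ) ^ ((octSet k ℓ x y ∩ Hn).card) := by
  classical
  have hcardk : ∀ ε : Fin ℓ → Fin 2,
      (Finset.image (octTuple k ℓ x y ε) Finset.univ).card = k := by
    intro ε
    rw [Finset.card_image_of_injective _ (oct_inj hlk x y hgood ε), Finset.card_univ,
      Fintype.card_fin]
  have hoct : octSet k ℓ x y = Finset.image (fun ε : Fin ℓ → Fin 2 =>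
      Finset.image (octTuple k ℓ x y ε) Finset.univ) Finset.univ := by
    unfold octSet
    refine Finset.filter_true_of_mem ?_
    intro T hT
    obtain ⟨ε, -, rfl⟩ := Finset.mem_image.mp hT
    exact hcardk ε
  have hinter : octSet k ℓ x y ∩ Hn = Finset.image (fun ε : Fin ℓ → Fin 2 =>
      Finset.image (octTuple k ℓ x y ε) Finset.univ)
      (Finset.univ.filter (fun ε : Fin ℓ → Fin 2 =>
        Finset.image (octTuple k ℓ x y ε) Finset.univ ∈ Hn)) := by
    rw [hoct]
    ext T
    simp only [Finset.mem_inter, Finset.mem_image, Finset.mem_filter, Finset.mem_univ, true_and]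
    constructor
    · rintro ⟨⟨ε, rfl⟩, hT⟩; exact ⟨ε, hT, rfl⟩
    · rintro ⟨ε, hε, rfl⟩; exact ⟨⟨ε, rfl⟩, hε⟩
  have hcard : (octSet k ℓ x y ∩ Hn).card
      = (Finset.univ.filter (fun ε : Fin ℓ → Fin 2 =>
          Finset.image (octTuple k ℓ x y ε) Finset.univ ∈ Hn)).card := by
    rw [hinter]
    exact Finset.card_image_of_injective _ (octImage_inj hlk x y hgood)
  rw [hcard, Finset.card_filter, ← Finset.prod_pow_eq_pow_sum]
  refine Finset.prod_congr rfl (fun ε _ => ?_)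
  unfold F
  split_ifs <;> simp

end Good

lemma card_noninj (I V : Type*) [Fintype I] [DecidableEq I] [Fintype V] [DecidableEq V] :
    (Finset.univ.filter (fun g : I → V => ¬ Function.Injective g)).card
      ≤ (Fintype.card I)^2 * (Fintype.card V)^(Fintype.card I - 1) := by
  classical
  have hsub : (Finset.univ.filter (fun g : I → V => ¬ Function.Injective g))
      ⊆ Finset.univ.offDiag.biUnion
        (fun p : I × I => Finset.univ.filter (fun g : I → V => g p.1 = g p.2)) := by
    intro g hg
    simp only [Finset.mem_filter, Finset.mem_univ, true_and] at hg
    obtain ⟨a, b, hab, hne⟩ := Function.not_injective_iff.mp hg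
    refine Finset.mem_biUnion.mpr ⟨(a, b), ?_, ?_⟩
    · exact Finset.mem_offDiag.mpr ⟨Finset.mem_univ _, Finset.mem_univ _, hne⟩
    · simp [hab]
  refine le_trans (Finset.card_le_card hsub) (le_trans (Finset.card_biUnion_le) ?_)
  have hone : ∀ p ∈ Finset.univ.offDiag,
      (Finset.univ.filter (fun g : I → V => g p.1 = g p.2)).card
        ≤ (Fintype.card V)^(Fintype.card I - 1) := by
    rintro ⟨a, b⟩ hp
    have hne : a ≠ b := (Finset.mem_offDiag.mp hp).2.2
    have : (Finset.univ.filter (fun g : I → V => g a = g b)).card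
        ≤ (Finset.univ : Finset ({j : I // j ≠ b} → V)).card := by
      refine Finset.card_le_card_of_injOn (fun g => fun j : {j : I // j ≠ b} => g j.1)
        (fun g _ => Finset.mem_univ _) ?_
      intro g1 h1 g2 h2 heq
      simp only [Finset.coe_filter, Set.mem_setOf_eq, Finset.mem_univ, true_and] at h1 h2
      funext j
      by_cases hj : j = b
      · subst hj
        have ha : g1 a = g2 a := congrFun heq ⟨a, hne⟩
        rw [← h1, ← h2] at *
        exact ha ▸ by rw [← h1, ha, h2]
      · exact congrFun heq ⟨j, hj⟩
    calc (Finset.univ.filter (fun g : I → V => g a = g b)).card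
        ≤ (Finset.univ : Finset ({j : I // j ≠ b} → V)).card := this
      _ = (Fintype.card V)^(Fintype.card I - 1) := by
          rw [Finset.card_univ, Fintype.card_fun]
          congr 1
          rw [Fintype.card_subtype_compl, Fintype.card_subtype_eq]
  calc ∑ p ∈ Finset.univ.offDiag,
        (Finset.univ.filter (fun g : I → V => g p.1 = g p.2)).card
      ≤ ∑ _p ∈ (Finset.univ : Finset I).offDiag, (Fintype.card V)^(Fintype.card I - 1) :=
        Finset.sum_le_sum hone
    _ = Finset.univ.offDiag.card * (Fintype.card V)^(Fintype.card I - 1) := by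
        rw [Finset.sum_const, smul_eq_mul]
    _ ≤ (Fintype.card I)^2 * (Fintype.card V)^(Fintype.card I - 1) := by
        refine Nat.mul_le_mul_right _ ?_
        rw [Finset.offDiag_card, Finset.card_univ, sq]
        exact Nat.sub_le _ _

lemma abs_sub_le_two {a b : ℝ} (ha : |a| ≤ 1) (hb : |b| ≤ 1) : |a - b| ≤ 2 := by
  calc |a - b| ≤ |a| + |b| := abs_sub _ _
    _ ≤ 2 := by linarith

lemma bad_card {ℓ : ℕ} (hlk : ℓ ≤ k) :
    (((Finset.univ : Finset ((Fin (k - ℓ) → Fin n) × (Fin ℓ × Fin 2 → Fin n)))).filter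
      (fun w => ¬ Function.Injective (Sum.elim w.1 w.2))).card
        ≤ (k + ℓ)^2 * n^(k + ℓ - 1) := by
  classical
  set I := (Fin (k - ℓ)) ⊕ (Fin ℓ × Fin 2) with hI
  have hcardI : Fintype.card I = k + ℓ := by
    simp only [hI, Fintype.card_sum, Fintype.card_prod, Fintype.card_fin]
    omega
  have h1 : (((Finset.univ : Finset ((Fin (k - ℓ) → Fin n) × (Fin ℓ × Fin 2 → Fin n)))).filter
      (fun w => ¬ Function.Injective (Sum.elim w.1 w.2))).card
        ≤ (Finset.univ.filter (fun g : I → Fin n => ¬ Function.Injective g)).card := by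
    refine Finset.card_le_card_of_injOn (fun w => Sum.elim w.1 w.2) ?_ ?_
    · intro w hw
      simp only [Finset.mem_filter, Finset.mem_univ, true_and, Finset.coe_filter, Set.mem_setOf_eq] at hw ⊢
      exact hw
    · intro w1 _ w2 _ heq
      refine Prod.ext (funext fun j => ?_) (funext fun j => ?_)
      · exact congrFun heq (Sum.inl j)
      · exact congrFun heq (Sum.inr j)
  calc _ ≤ (Finset.univ.filter (fun g : I → Fin n => ¬ Function.Injective g)).card := h1
    _ ≤ (Fintype.card I)^2 * (Fintype.card (Fin n))^(Fintype.card I - 1) := card_noninj I (Fin n)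
    _ = (k + ℓ)^2 * n^(k + ℓ - 1) := by rw [hcardI, Fintype.card_fin]

lemma Xl_dev {ℓ : ℕ} (hlk : ℓ ≤ k) (Hn : Finset (Finset (Fin n))) :
    X k ℓ n (F Hn) ≤ |devSum k ℓ Hn| + 2 * (((k + ℓ)^2 * n^(k + ℓ - 1) : ℕ) : ℝ) := by
  classical
  have hdiff : X k ℓ n (F Hn) - devSum k ℓ Hn
      = ∑ w : (Fin (k - ℓ) → Fin n) × (Fin ℓ × Fin 2 → Fin n),
          ((∏ ε : Fin ℓ → Fin 2, F Hn (octTuple k ℓ w.1 w.2 ε))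
            - (-1 : ℝ) ^ ((octSet k ℓ w.1 w.2 ∩ Hn).card)) := by
    rw [Finset.sum_sub_distrib]
    unfold X devSum
    rw [Fintype.sum_prod_type, Fintype.sum_prod_type]
  have habs : |X k ℓ n (F Hn) - devSum k ℓ Hn|
      ≤ 2 * (((k + ℓ)^2 * n^(k + ℓ - 1) : ℕ) : ℝ) := by
    rw [hdiff]
    refine le_trans (Finset.abs_sum_le_sum_abs _ _) ?_
    have hpt : ∀ w : (Fin (k - ℓ) → Fin n) × (Fin ℓ × Fin 2 → Fin n),
        |(∏ ε : Fin ℓ → Fin 2, F Hn (octTuple k ℓ w.1 w.2 ε))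
            - (-1 : ℝ) ^ ((octSet k ℓ w.1 w.2 ∩ Hn).card)|
          ≤ if ¬ Function.Injective (Sum.elim w.1 w.2) then 2 else 0 := by
      intro w
      by_cases hg : Function.Injective (Sum.elim w.1 w.2)
      · rw [if_neg (not_not_intro hg), term_eq_good hlk w.1 w.2 Hn hg]
        simp
      · rw [if_pos hg]
        refine abs_sub_le_two ?_ ?_
        · rw [Finset.abs_prod]
          refine Finset.prod_le_one (fun _ _ => abs_nonneg _) (fun ε _ => le_of_eq (F_abs Hn _))
        · rw [abs_pow, abs_neg, abs_one, one_pow]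
      -- end
    refine le_trans (Finset.sum_le_sum (fun w _ => hpt w)) ?_
    rw [Finset.sum_ite, Finset.sum_const, Finset.sum_const_zero, add_zero, nsmul_eq_mul]
    rw [mul_comm]
    refine mul_le_mul_of_nonneg_left ?_ (by norm_num)
    exact_mod_cast bad_card hlk
  calc X k ℓ n (F Hn) = devSum k ℓ Hn + (X k ℓ n (F Hn) - devSum k ℓ Hn) := by ring
    _ ≤ |devSum k ℓ Hn| + |X k ℓ n (F Hn) - devSum k ℓ Hn| :=
        add_le_add (le_abs_self _) (le_abs_self _)
    _ ≤ |devSum k ℓ Hn| + 2 * (((k + ℓ)^2 * n^(k + ℓ - 1) : ℕ) : ℝ) := by linarith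

lemma Aset_eq_empty {ℓ : ℕ} (β : Fin k → Fin t) (hk2 : 2 ≤ k) (hl2 : 2 ≤ ℓ) (hlk : ℓ ≤ k)
    (hβ : β ⟨k - 1, by omega⟩ ≠ β ⟨k - 2, by omega⟩) :
    Aset β ℓ = ∅ := by
  rw [Finset.eq_empty_iff_forall_notMem]
  intro i hi
  simp only [Aset, Finset.mem_filter, Finset.mem_univ, true_and] at hi
  have h1 := hi ⟨k - 1, by omega⟩ (by simp only [Fin.val_mk]; omega)
  have h2 := hi ⟨k - 2, by omega⟩ (by simp only [Fin.val_mk]; omega)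
  exact hβ (h1.trans h2.symm)

lemma Gm_top {ℓ : ℕ} (Hn : Finset (Finset (Fin n))) (β : Fin k → Fin t)
    (S : Fin t → Finset (Finset (Fin n))) (hk2 : 2 ≤ k) (hl2 : 2 ≤ ℓ) (hlk : ℓ ≤ k)
    (hβ : β ⟨k - 1, by omega⟩ ≠ β ⟨k - 2, by omega⟩) :
    Gm Hn β S ℓ = F Hn := by
  funext z
  unfold Gm
  rw [Aset_eq_empty β hk2 hl2 hlk hβ, Finset.prod_empty, mul_one]

lemma F_eq_g (Hn : Finset (Finset (Fin n))) (β : Fin k → Fin t) (z : Fin k → Fin n) :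
    F Hn z = 1 - 2 * (if Finset.univ.biUnion (Phi β z) ∈ Hn then (1:ℝ) else 0) := by
  rw [biUnion_Phi]
  unfold F
  split_ifs <;> norm_num

lemma X0_eq (Hn : Finset (Finset (Fin n))) (β : Fin k → Fin t)
    (S : Fin t → Finset (Finset (Fin n)))
    (hS : ∀ i, ∀ s ∈ S i, s.card = (Finset.univ.filter (fun j => β j = i)).card) :
    X k 0 n (Gm Hn β S 0)
      = (∏ i : Fin t, (Nat.factorial (Finset.univ.filter (fun j => β j = i)).card : ℝ))
        * ((∏ i : Fin t, ((S i).card : ℝ)) - 2 * (eCount Hn S : ℝ)) := by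
  classical
  rw [X_zero]
  have h1 : ∀ z : Fin k → Fin n, Gm Hn β S 0 z
      = (∏ i, if Phi β z i ∈ S i then (1:ℝ) else 0)
        * (1 - 2 * (if Finset.univ.biUnion (Phi β z) ∈ Hn then (1:ℝ) else 0)) := by
    intro z
    unfold Gm u
    rw [Aset_zero, ← F_eq_g Hn β z, mul_comm]
  simp_rw [h1]
  have h2 := sum_over_tuples β S hS
    (fun σ => 1 - 2 * (if Finset.univ.biUnion σ ∈ Hn then (1:ℝ) else 0))
  rw [h2]
  congr 1
  rw [Finset.sum_sub_distrib, Finset.sum_const, nsmul_eq_mul, mul_one,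
    Fintype.card_piFinset, ← Finset.mul_sum, Finset.sum_boole]
  unfold eCount
  push_cast
  ring

lemma main_bound {ℓ : ℕ} (hk2 : 2 ≤ k) (hl2 : 2 ≤ ℓ) (hlk : ℓ ≤ k)
    (β : Fin k → Fin t)
    (hβ : β ⟨k - 1, by omega⟩ ≠ β ⟨k - 2, by omega⟩)
    (Hn : Finset (Finset (Fin n))) (S : Fin t → Finset (Finset (Fin n)))
    (hS : ∀ i, ∀ s ∈ S i, s.card = (Finset.univ.filter (fun j => β j = i)).card) :
    |(eCount Hn S : ℝ) - (1/2 : ℝ) * ∏ i : Fin t, ((S i).card : ℝ)| ^ (2^ℓ)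
      ≤ (n:ℝ)^(k * 2^ℓ - k - ℓ)
        * (|devSum k ℓ Hn| + 2 * (((k + ℓ)^2 * n^(k + ℓ - 1) : ℕ) : ℝ)) := by
  classical
  set X0 := X k 0 n (Gm Hn β S 0) with hX0
  set c := ∏ i : Fin t, (Nat.factorial (Finset.univ.filter (fun j => β j = i)).card : ℝ) with hc
  have hc1 : 1 ≤ c := by
    rw [hc]
    have := Finset.prod_le_prod (f := fun _ : Fin t => (1:ℝ))
      (g := fun i => (Nat.factorial (Finset.univ.filter (fun j => β j = i)).card : ℝ))
      (s := Finset.univ) (fun i _ => zero_le_one)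
      (fun i _ => by
        exact_mod_cast Nat.one_le_iff_ne_zero.mpr (Nat.factorial_ne_zero _))
    simpa using this
  have heq : |(eCount Hn S : ℝ) - (1/2 : ℝ) * ∏ i : Fin t, ((S i).card : ℝ)| ≤ |X0| := by
    have h1 : X0 = c * ((∏ i : Fin t, ((S i).card : ℝ)) - 2 * (eCount Hn S : ℝ)) :=
      X0_eq Hn β S hS
    have h2 : (eCount Hn S : ℝ) - (1/2 : ℝ) * ∏ i : Fin t, ((S i).card : ℝ)
        = -(1/(2*c)) * X0 := by
      rw [h1]
      field_simp
      ring
    rw [h2, abs_mul, abs_neg]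
    have h3 : |1/(2*c)| ≤ 1 := by
      rw [abs_of_pos (by positivity)]
      rw [div_le_one (by positivity)]
      linarith
    nlinarith [abs_nonneg X0]
  have hch := cascade Hn β S ℓ (by omega) hlk
  rw [Gm_top Hn β S hk2 hl2 hlk hβ] at hch
  have hXl := Xl_dev hlk Hn
  calc |(eCount Hn S : ℝ) - (1/2 : ℝ) * ∏ i : Fin t, ((S i).card : ℝ)| ^ (2^ℓ)
      ≤ |X0| ^ (2^ℓ) := pow_le_pow_left₀ (abs_nonneg _) heq _
    _ = X0 ^ (2^ℓ) := by
        rw [← abs_pow]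
        refine abs_of_nonneg ?_
        have h4 : 2^ℓ = 2 * 2^(ℓ-1) := by
          rw [← pow_succ']
          congr 1
          omega
        rw [h4, pow_mul]
        exact pow_nonneg (sq_nonneg _) _
    _ ≤ (n:ℝ)^(k * 2^ℓ - k - ℓ) * X k ℓ n (F Hn) := hch
    _ ≤ (n:ℝ)^(k * 2^ℓ - k - ℓ)
        * (|devSum k ℓ Hn| + 2 * (((k + ℓ)^2 * n^(k + ℓ - 1) : ℕ) : ℝ)) := by
        refine mul_le_mul_of_nonneg_left hXl (by positivity)

lemma perm_filter_card {α : Type*} [Fintype α] [DecidableEq α] (σ : Equiv.Perm α)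
    (p : α → Prop) [DecidablePred p] :
    (Finset.univ.filter (fun j => p (σ j))).card = (Finset.univ.filter p).card := by
  refine Finset.card_bij (fun j _ => σ j) ?_ ?_ ?_
  · intro j hj
    simp only [Finset.mem_filter, Finset.mem_univ, true_and] at hj ⊢
    exact hj
  · intro j1 _ j2 _ h
    exact σ.injective h
  · intro j hj
    simp only [Finset.mem_filter, Finset.mem_univ, true_and] at hj
    exact ⟨σ.symm j, by simp [hj], by simp⟩

lemma sigma_fiber_card {t : ℕ} (c : Fin t → ℕ) (i : Fin t) :
    (Finset.univ.filter (fun a : (Σ j : Fin t, Fin (c j)) => a.1 = i)).card = c i := by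
  classical
  rw [Finset.card_filter, ← Finset.univ_sigma_univ, Finset.sum_sigma]
  have h1 : ∀ j : Fin t, (∑ _b : Fin (c j), if j = i then 1 else 0) = if j = i then c j else 0 := by
    intro j
    split_ifs <;> simp
  simp only [h1]
  rw [Finset.sum_ite_eq' Finset.univ i (fun j => c j)]
  simp

lemma exists_beta (k t : ℕ) (c : Fin t → ℕ) (hsum : ∑ i, c i = k) (ht : 2 ≤ t)
    (hpos : ∀ i, 0 < c i) (hk2 : 2 ≤ k) :
    ∃ β : Fin k → Fin t, (∀ i, (Finset.univ.filter (fun j => β j = i)).card = c i) ∧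
      β ⟨k - 1, by omega⟩ ≠ β ⟨k - 2, by omega⟩ := by
  classical
  have hcard : Fintype.card (Fin k) = Fintype.card (Σ j : Fin t, Fin (c j)) := by
    rw [Fintype.card_fin, Fintype.card_sigma]
    simp only [Fintype.card_fin]
    omega
  obtain ⟨β0, hfib0⟩ : ∃ β0 : Fin k → Fin t,
      ∀ i, (Finset.univ.filter (fun j => β0 j = i)).card = c i := by
    obtain ⟨e⟩ : Nonempty (Fin k ≃ (Σ j : Fin t, Fin (c j))) := ⟨Fintype.equivOfCardEq hcard⟩
    refine ⟨fun j => (e j).1, fun i => ?_⟩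
    have heq : (Finset.univ.filter (fun j : Fin k => (e j).1 = i)).card
        = (Finset.univ.filter (fun a : (Σ j : Fin t, Fin (c j)) => a.1 = i)).card := by
      refine Finset.card_bij (fun j _ => e j) ?_ ?_ ?_
      · intro j hj
        simp only [Finset.mem_filter, Finset.mem_univ, true_and] at hj ⊢
        exact hj
      · intro j1 _ j2 _ h
        exact e.injective h
      · intro a ha
        simp only [Finset.mem_filter, Finset.mem_univ, true_and] at ha
        exact ⟨e.symm a, by simpa using ha, by simp⟩
    rw [heq, sigma_fiber_card]
  set jlast : Fin k := ⟨k - 1, by omega⟩ with hjlast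
  set jprev : Fin k := ⟨k - 2, by omega⟩ with hjprev
  have hne : jlast ≠ jprev := by
    simp only [hjlast, hjprev, Ne, Fin.mk.injEq]
    omega
  by_cases hgood : β0 jlast ≠ β0 jprev
  · exact ⟨β0, hfib0, hgood⟩
  · push_neg at hgood
    -- pick i' ≠ β0 jlast, then j0 in its fiber
    obtain ⟨i', hi'⟩ : ∃ i' : Fin t, i' ≠ β0 jlast :=
      Fintype.exists_ne_of_one_lt_card (by simp only [Fintype.card_fin]; omega) (β0 jlast)
    have hfib' : 0 < (Finset.univ.filter (fun j => β0 j = i')).card := by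
      rw [hfib0 i']
      exact hpos i'
    obtain ⟨j0, hj0⟩ := Finset.card_pos.mp hfib'
    simp only [Finset.mem_filter, Finset.mem_univ, true_and] at hj0
    have hj0last : j0 ≠ jlast := fun h => hi' (by rw [← hj0, h])
    have hj0prev : j0 ≠ jprev := fun h => hi' (by rw [← hj0, h, ← hgood])
    set σ : Equiv.Perm (Fin k) := Equiv.swap jprev j0 with hσ
    refine ⟨fun j => β0 (σ j), fun i => ?_, ?_⟩
    · rw [perm_filter_card σ (fun j => β0 j = i), hfib0]
    · have h1 : σ jlast = jlast := Equiv.swap_apply_of_ne_of_ne hne (fun h => (hj0last h.symm).elim)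
      have h2 : σ jprev = j0 := Equiv.swap_apply_left _ _
      show β0 (σ jlast) ≠ β0 (σ jprev)
      rw [h1, h2, hj0]
      exact fun h => hi' h.symm

end DIE

/-- `Dev(ℓ)` implies `Expand_{1/2}(π)` for every proper partition `π`. -/
theorem dev_implies_expand (k ℓ : ℕ) (hk : 2 ≤ k) (hℓ2 : 2 ≤ ℓ) (hℓk : ℓ ≤ k)
    (π : List ℕ) (hπ : ProperPartition k π)
    (H : HSeq) (hH : UniformSeq k H) (h : Dev k ℓ H) :
    Expand k (1/2 : ℝ) π H := by
  classical
  obtain ⟨hlen, hpos, hsum⟩ := hπ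
  have hsum' : ∑ i : Fin π.length, π.get i = k := by
    simpa [List.get_eq_getElem, hsum] using Fin.sum_univ_get π
  obtain ⟨β, hfib, hβ⟩ := DIE.exists_beta k π.length (fun i => π.get i) hsum' hlen
    (fun i => hpos _ (List.get_mem π i)) hk
  -- notation
  set q : ℕ := 2^ℓ with hq
  set E : ℕ := k * q - k - ℓ with hE
  have hq0 : (q : ℝ) ≠ 0 := by positivity
  have hkq : E + (k + ℓ) = k * q := by
    have h2l : ℓ + 1 ≤ q := by rw [hq]; exact (Nat.lt_two_pow_self (n := ℓ))
    have hkl : k + ℓ ≤ k * q := by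
      calc k + ℓ ≤ k + k*ℓ := by
            have : ℓ ≤ k * ℓ := Nat.le_mul_of_pos_left ℓ (by omega)
            omega
        _ = k * (ℓ+1) := by ring
        _ ≤ k * q := Nat.mul_le_mul_left k h2l
    omega
  set D : ℕ → ℝ := fun n => |devSum k ℓ (H n)|
    + 2 * (((k + ℓ)^2 * n^(k + ℓ - 1) : ℕ) : ℝ) with hD
  have hDnonneg : ∀ n, 0 ≤ D n := by
    intro n
    rw [hD]
    positivity
  set f : ℕ → ℝ := fun n => ((n:ℝ)^E * D n) ^ ((q : ℝ)⁻¹) with hf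
  have hfnonneg : ∀ n, 0 ≤ f n := by
    intro n
    rw [hf]
    have : 0 ≤ (n:ℝ)^E * D n := mul_nonneg (by positivity) (hDnonneg n)
    positivity
  refine ⟨f, ?_, ?_⟩
  · -- littleO
    have hD_lo : D =o[atTop] (fun n => (n:ℝ)^(k+ℓ)) := by
      rw [hD]
      refine IsLittleO.add ?_ ?_
      · exact h.abs_left
      · have h1 : (fun x : ℝ => 2 * ((k + ℓ)^2 : ℝ) * x^(k + ℓ - 1))
            =o[atTop] (fun x : ℝ => x^(k+ℓ)) := by
          refine IsLittleO.const_mul_left ?_ _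
          exact isLittleO_pow_pow_atTop_of_lt (by omega)
        have h2 := h1.comp_tendsto tendsto_natCast_atTop_atTop
        refine h2.congr' ?_ (by rfl)
        filter_upwards with n
        simp only [Function.comp_apply]
        push_cast
        ring
    have hND : (fun n : ℕ => (n:ℝ)^E * D n) =o[atTop] (fun n : ℕ => (n:ℝ)^(k * q)) := by
      have h3 : (fun n : ℕ => (n:ℝ)^E * D n) =o[atTop] (fun n : ℕ => (n:ℝ)^E * (n:ℝ)^(k+ℓ)) :=
        (isBigO_refl (fun n : ℕ => (n:ℝ)^E) atTop).mul_isLittleO hD_lo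
      refine h3.congr' (by rfl) ?_
      filter_upwards with n
      rw [← pow_add, hkq]
    rw [isLittleO_iff]
    intro c hc
    have hcq : (0:ℝ) < c ^ q := by positivity
    have := (isLittleO_iff.mp hND) hcq
    filter_upwards [this] with n hn
    have hnE : (0:ℝ) ≤ (n:ℝ)^E * D n := mul_nonneg (by positivity) (hDnonneg n)
    rw [Real.norm_of_nonneg (hfnonneg n), Real.norm_of_nonneg (by positivity : (0:ℝ) ≤ (n:ℝ)^k)]
    rw [Real.norm_of_nonneg hnE, Real.norm_of_nonneg (by positivity : (0:ℝ) ≤ (n:ℝ)^(k*q))] at hn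
    rw [hf]
    calc ((n:ℝ)^E * D n) ^ ((q : ℝ)⁻¹)
        ≤ (c ^ q * (n:ℝ)^(k*q)) ^ ((q : ℝ)⁻¹) :=
          Real.rpow_le_rpow hnE hn (by positivity)
      _ = c * (n:ℝ)^k := by
          rw [Real.mul_rpow (by positivity) (by positivity)]
          congr 1
          · rw [← Real.rpow_natCast c q, ← Real.rpow_mul hc.le, mul_inv_cancel₀ hq0,
              Real.rpow_one]
          · rw [← Real.rpow_natCast ((n:ℝ)) (k*q), ← Real.rpow_mul (by positivity)]
            rw [show ((k * q : ℕ) : ℝ) * (q:ℝ)⁻¹ = ((k:ℕ) : ℝ) by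
              push_cast
              field_simp]
            rw [Real.rpow_natCast]
  · -- the bound for every n and S
    intro n S hcards
    have hS' : ∀ i, ∀ s ∈ S i, s.card = (Finset.univ.filter (fun j => β j = i)).card := by
      intro i s hs
      rw [hcards i s hs, ← hfib i]
    have hmb := DIE.main_bound hk hℓ2 hℓk β hβ (H n) S hS'
    have herr0 : (0:ℝ) ≤ |(eCount (H n) S : ℝ) - (1/2 : ℝ) * ∏ i : Fin π.length, ((S i).card : ℝ)| :=
      abs_nonneg _
    set err := |(eCount (H n) S : ℝ) - (1/2 : ℝ) * ∏ i : Fin π.length, ((S i).card : ℝ)| with herr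
    calc err = (err ^ (q:ℕ)) ^ ((q : ℝ)⁻¹) := by
          rw [← Real.rpow_natCast err q, ← Real.rpow_mul herr0, mul_inv_cancel₀ hq0,
            Real.rpow_one]
      _ ≤ ((n:ℝ)^E * D n) ^ ((q : ℝ)⁻¹) := by
          refine Real.rpow_le_rpow (by positivity) ?_ (by positivity)
          rw [herr]
          exact hmb
      _ = f n := rfl
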